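/- Let r ≥ 1 be an integer and let s, w ∈ ℂ with Re(s) > r and Re(w) > 0. Then (1/Γ(w)) · ∫_{1}^{∞} (u−1)^r · u^{−s−1} (log u)^{w−1} du = Σ_{n=0}^{r} (−1)^n · C(r,n) · (s−r+n)^{−w}. -/

import Mathlib

open MeasureTheory Complex Set Real Filter

namespace AbsHurwitzAux

lemma cont_cpow (w : ℂ) : ContinuousOn (fun t : ℝ => (t : ℂ) ^ w) (Set.Ioi 0) :=
  fun t ht => (Complex.continuousAt_ofReal_cpow_const t w (Or.inr (ne_of_gt ht))).continuousWithinAt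

lemma int_real {b c : ℝ} (hb : 0 < b) (hc : -1 < c) :
    IntegrableOn (fun t : ℝ => t ^ c * Real.exp (-b * t)) (Set.Ioi 0) := by
  have := integrableOn_rpow_mul_exp_neg_mul_rpow hc zero_lt_one hb
  simpa [Real.rpow_one] using this

lemma meas_aux (a w : ℂ) :
    AEStronglyMeasurable (fun t : ℝ => (t : ℂ) ^ (w - 1) * Complex.exp (-a * t))
      (volume.restrict (Set.Ioi 0)) := by
  refine ContinuousOn.aestronglyMeasurable ?_ measurableSet_Ioi
  exact (cont_cpow (w - 1)).mul
    ((Complex.continuous_exp.comp (continuous_const.mul Complex.continuous_ofReal)).continuousOn)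

lemma norm_aux {a w : ℂ} {t : ℝ} (ht : 0 < t) :
    ‖(t : ℂ) ^ (w - 1) * Complex.exp (-a * t)‖ = t ^ (w.re - 1) * Real.exp (-a.re * t) := by
  rw [norm_mul,
    Complex.norm_cpow_eq_rpow_re_of_pos ht, Complex.norm_exp]
  have h2 : (-a * (t:ℂ)).re = -a.re * t := by simp [Complex.mul_re]
  rw [Complex.sub_re, Complex.one_re, h2]

lemma int_aux {a w : ℂ} (ha : 0 < a.re) (hw : 0 < w.re) :
    IntegrableOn (fun t : ℝ => (t : ℂ) ^ (w - 1) * Complex.exp (-a * t)) (Set.Ioi 0) := by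
  refine (int_real ha (by linarith : (-1:ℝ) < w.re - 1)).mono' (meas_aux a w) ?_
  filter_upwards [ae_restrict_mem measurableSet_Ioi] with t ht
  rw [norm_aux ht]

lemma key_t {w : ℂ} (hw : 0 < w.re) {a : ℂ} (ha : 0 < a.re) :
    (∫ t in Set.Ioi (0:ℝ), (t : ℂ) ^ (w - 1) * Complex.exp (-a * t))
      = Complex.Gamma w * a ^ (-w) := by
  set U : Set ℂ := {z | 0 < z.re} with hU
  have hUopen : IsOpen U := isOpen_lt continuous_const Complex.continuous_re
  have hUconn : IsPreconnected U := (convex_halfSpace_re_gt 0).isPreconnected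
  set F : ℂ → ℂ := fun z => ∫ t in Set.Ioi (0:ℝ), (t : ℂ) ^ (w - 1) * Complex.exp (-z * t)
    with hF_def
  set G : ℂ → ℂ := fun z => Complex.Gamma w * z ^ (-w) with hG_def
  have hF : AnalyticOnNhd ℂ F U := by
    refine DifferentiableOn.analyticOnNhd (fun z hz => ?_) hUopen
    have hz' : 0 < z.re := hz
    set ε : ℝ := z.re / 2 with hε
    have hε0 : 0 < ε := by positivity
    obtain ⟨-, hd⟩ := hasDerivAt_integral_of_dominated_loc_of_deriv_le
      (F := fun z (t : ℝ) => (t : ℂ) ^ (w - 1) * Complex.exp (-z * t))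
      (F' := fun z (t : ℝ) => (t : ℂ) ^ (w - 1) * (Complex.exp (-z * t) * -(t : ℂ)))
      (bound := fun t : ℝ => t ^ w.re * Real.exp (-ε * t))
      (Metric.ball_mem_nhds z hε0)
      (Filter.Eventually.of_forall fun a => meas_aux a w)
      (int_aux hz' hw)
      (by
        refine ContinuousOn.aestronglyMeasurable ?_ measurableSet_Ioi
        exact (cont_cpow (w - 1)).mul
          (((Complex.continuous_exp.comp
            (continuous_const.mul Complex.continuous_ofReal)).mul
            Complex.continuous_ofReal.neg).continuousOn))
      (by
        filter_upwards [ae_restrict_mem measurableSet_Ioi] with t ht a ha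
        replace ht : (0:ℝ) < t := ht
        have hare : ε ≤ a.re := by
          have := Complex.abs_re_le_norm (a - z)
          rw [Metric.mem_ball, Complex.dist_eq] at ha
          have h2 : |a.re - z.re| < ε := by
            calc |a.re - z.re| = |(a - z).re| := by simp [Complex.sub_re]
              _ ≤ ‖a - z‖ := Complex.abs_re_le_norm _
              _ < ε := ha
          have := abs_lt.mp h2
          simp only [hε] at *
          linarith [this.1]
        rw [norm_mul, norm_mul,
          Complex.norm_cpow_eq_rpow_re_of_pos ht, Complex.norm_exp]
        have h1 : ‖(-(t : ℂ))‖ = t := by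
          simp [abs_of_pos ht]
        have h2 : (-a * (t : ℂ)).re = -a.re * t := by simp [Complex.mul_re]
        rw [h1, h2, Complex.sub_re, Complex.one_re]
        have h3 : t ^ w.re = t ^ (w.re - 1) * t := by
          have := Real.rpow_add_one (ne_of_gt ht) (w.re - 1)
          rwa [sub_add_cancel] at this
        rw [h3]
        have h4 : Real.exp (-a.re * t) ≤ Real.exp (-ε * t) := by
          apply Real.exp_le_exp.mpr
          nlinarith [ht.le]
        have h5 : (0:ℝ) ≤ t ^ (w.re - 1) := Real.rpow_nonneg ht.le _
        calc t ^ (w.re - 1) * (Real.exp (-a.re * t) * t)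
            = (t ^ (w.re - 1) * t) * Real.exp (-a.re * t) := by ring
          _ ≤ (t ^ (w.re - 1) * t) * Real.exp (-ε * t) :=
              mul_le_mul_of_nonneg_left h4 (mul_nonneg h5 ht.le)
          _ = t ^ (w.re - 1) * t * Real.exp (-ε * t) := by ring
        )
      (int_real hε0 (by linarith : (-1:ℝ) < w.re))
      (by
        refine Filter.Eventually.of_forall fun t => fun a _ => ?_
        have h1 : HasDerivAt (fun z : ℂ => -z * (t : ℂ)) (-(t : ℂ)) a := by
          simpa using ((hasDerivAt_id a).neg.mul_const (t : ℂ))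
        exact (h1.cexp).const_mul ((t : ℂ) ^ (w - 1)))
    exact hd.differentiableAt.differentiableWithinAt
  have hG : AnalyticOnNhd ℂ G U := by
    refine DifferentiableOn.analyticOnNhd (fun z hz => ?_) hUopen
    refine (DifferentiableAt.const_mul ?_ _).differentiableWithinAt
    refine DifferentiableAt.cpow differentiableAt_id (differentiableAt_const _) ?_
    exact Complex.mem_slitPlane_iff.mpr (Or.inl hz)
  have h_real : ∀ x : ℝ, 0 < x → F x = G x := by
    intro x hx
    have h := Complex.integral_cpow_mul_exp_neg_mul_Ioi hw hx
    have heq : F x = (1 / (x:ℂ)) ^ w * Complex.Gamma w := by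
      rw [hF_def, ← h]
      apply setIntegral_congr_fun measurableSet_Ioi
      intro t _
      push_cast
      ring_nf
    rw [heq]
    show (1 / (x:ℂ)) ^ w * Complex.Gamma w = Complex.Gamma w * (x:ℂ) ^ (-w)
    have harg : Complex.arg (x : ℂ) ≠ Real.pi := by
      rw [Complex.arg_ofReal_of_nonneg hx.le]
      exact Ne.symm Real.pi_ne_zero
    rw [cpow_neg, one_div, inv_cpow _ _ harg, mul_comm]
  have hfreq : ∃ᶠ z in nhdsWithin (1:ℂ) {(1:ℂ)}ᶜ, F z = G z := by
    have htend : Filter.Tendsto (fun n : ℕ => ((1 + ((n:ℝ)+1)⁻¹ : ℝ) : ℂ)) Filter.atTop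
        (nhdsWithin (1:ℂ) {(1:ℂ)}ᶜ) := by
      apply tendsto_nhdsWithin_of_tendsto_nhds_of_eventually_within
      · have hre : Filter.Tendsto (fun n : ℕ => (1 + ((n:ℝ)+1)⁻¹ : ℝ)) Filter.atTop (nhds 1) := by
          have := tendsto_one_div_add_atTop_nhds_zero_nat (𝕜 := ℝ)
          simp only [one_div] at this
          simpa using tendsto_const_nhds.add this
        have h2 : Filter.Tendsto (fun n : ℕ => ((1 + ((n:ℝ)+1)⁻¹ : ℝ) : ℂ)) Filter.atTop
            (nhds ((1:ℝ):ℂ)) := (Complex.continuous_ofReal.tendsto (1:ℝ)).comp hre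
        simpa using h2
      · refine Filter.Eventually.of_forall fun n => ?_
        simp only [Set.mem_compl_iff, Set.mem_singleton_iff]
        intro h
        have : (1 + ((n:ℝ)+1)⁻¹ : ℝ) = 1 := by
          exact_mod_cast h
        have hpos : (0:ℝ) < ((n:ℝ)+1)⁻¹ := by positivity
        linarith
    exact htend.frequently (Filter.Frequently.of_forall fun n =>
      h_real _ (by positivity))
  have := hF.eqOn_of_preconnected_of_frequently_eq hG hUconn
    (show (1:ℂ) ∈ U by simp [hU]) hfreq
  exact this ha

lemma exp_image : Real.exp '' (Set.Ioi 0) = Set.Ioi 1 := by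
  ext x
  simp only [Set.mem_image, Set.mem_Ioi]
  constructor
  · rintro ⟨t, ht, rfl⟩
    exact Real.one_lt_exp_iff.mpr ht
  · intro hx
    exact ⟨Real.log x, Real.log_pos hx, Real.exp_log (lt_trans one_pos hx)⟩

lemma cov_pointwise {c w : ℂ} (t : ℝ) :
    |Real.exp t| • (((Real.exp t : ℝ) : ℂ) ^ (-c - 1) *
        ((Real.log (Real.exp t) : ℝ) : ℂ) ^ (w - 1))
      = (t : ℂ) ^ (w - 1) * Complex.exp (-c * t) := by
  rw [abs_of_pos (Real.exp_pos t), Real.log_exp, Complex.real_smul, Complex.ofReal_exp,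
    Complex.cpow_def_of_ne_zero (Complex.exp_ne_zero _),
    Complex.log_exp (by rw [Complex.ofReal_im]; linarith [Real.pi_pos])
      (by rw [Complex.ofReal_im]; linarith [Real.pi_pos]),
    ← mul_assoc, ← Complex.exp_add]
  rw [mul_comm ((Complex.exp ((t:ℂ) + (t:ℂ) * (-c - 1))))]
  congr 1
  ring

lemma key_u {c w : ℂ} (hc : 0 < c.re) (hw : 0 < w.re) :
    IntegrableOn (fun u : ℝ => (u : ℂ) ^ (-c - 1) * ((Real.log u : ℝ) : ℂ) ^ (w - 1))
        (Set.Ioi 1) ∧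
      (∫ u in Set.Ioi (1:ℝ), (u : ℂ) ^ (-c - 1) * ((Real.log u : ℝ) : ℂ) ^ (w - 1))
        = Complex.Gamma w * c ^ (-w) := by
  have hderiv : ∀ t ∈ Set.Ioi (0:ℝ), HasDerivWithinAt Real.exp (Real.exp t) (Set.Ioi 0) t :=
    fun t _ => (Real.hasDerivAt_exp t).hasDerivWithinAt
  have hinj : Set.InjOn Real.exp (Set.Ioi 0) := Real.exp_injective.injOn
  set g : ℝ → ℂ := fun u => (u : ℂ) ^ (-c - 1) * ((Real.log u : ℝ) : ℂ) ^ (w - 1) with hg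
  have h1 := integrableOn_image_iff_integrableOn_abs_deriv_smul measurableSet_Ioi hderiv hinj g
  have h2 := integral_image_eq_integral_abs_deriv_smul measurableSet_Ioi hderiv hinj g
  rw [exp_image] at h1 h2
  have heq : (fun t : ℝ => |Real.exp t| • g (Real.exp t))
      = fun t : ℝ => (t : ℂ) ^ (w - 1) * Complex.exp (-c * t) := by
    funext t
    exact cov_pointwise t
  constructor
  · rw [h1, heq]
    exact int_aux hc hw
  · rw [h2]
    calc (∫ t in Set.Ioi (0:ℝ), |Real.exp t| • g (Real.exp t))
        = ∫ t in Set.Ioi (0:ℝ), (t : ℂ) ^ (w - 1) * Complex.exp (-c * t) := by rw [heq]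
      _ = Complex.Gamma w * c ^ (-w) := key_t hw hc

end AbsHurwitzAux

theorem absolute_hurwitz_Gm_tensor (r : ℕ) (hr : 1 ≤ r) (s w : ℂ)
    (hs : (r : ℝ) < s.re) (hw : 0 < w.re) :
    (1 / Complex.Gamma w) *
      ∫ u in Set.Ioi (1 : ℝ),
        ((u : ℂ) - 1) ^ r * (u : ℂ) ^ (-s - 1) * (Real.log u : ℂ) ^ (w - 1) =
    ∑ n ∈ Finset.range (r + 1),
      (-1 : ℂ) ^ n * (r.choose n : ℂ) * (s - (r : ℂ) + (n : ℂ)) ^ (-w) := by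
  have hcre : ∀ n : ℕ, 0 < (s - (r : ℂ) + (n : ℂ)).re := by
    intro n
    simp only [Complex.add_re, Complex.sub_re, Complex.natCast_re]
    have : (0:ℝ) ≤ (n : ℝ) := Nat.cast_nonneg n
    linarith
  have hpt : ∀ u ∈ Set.Ioi (1:ℝ),
      ((u : ℂ) - 1) ^ r * (u : ℂ) ^ (-s - 1) * (Real.log u : ℂ) ^ (w - 1)
        = ∑ n ∈ Finset.range (r + 1), ((-1 : ℂ) ^ n * (r.choose n : ℂ)) *
            ((u : ℂ) ^ (-(s - (r : ℂ) + (n : ℂ)) - 1) * (Real.log u : ℂ) ^ (w - 1)) := by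
    intro u hu
    have hu1 : (1:ℝ) < u := hu
    have hu0 : (u : ℂ) ≠ 0 := by
      simp only [ne_eq, Complex.ofReal_eq_zero]
      linarith
    rw [sub_pow, Finset.sum_mul, Finset.sum_mul,
      ← Finset.sum_range_reflect]
    apply Finset.sum_congr rfl
    intro n hn
    have hnr : n ≤ r := Nat.lt_succ_iff.mp (Finset.mem_range.mp hn)
    have e1 : r + 1 - 1 - n = r - n := by omega
    rw [e1]
    have e2 : ((-1 : ℂ)) ^ (r - n + r) = (-1) ^ n := by
      rw [show r - n + r = n + 2 * (r - n) by omega, pow_add, pow_mul]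
      simp
    have e3 : r.choose (r - n) = r.choose n := Nat.choose_symm hnr
    have e4 : (u : ℂ) ^ (r - n : ℕ) * (u : ℂ) ^ (-s - 1)
        = (u : ℂ) ^ (-(s - (r : ℂ) + (n : ℂ)) - 1) := by
      rw [← Complex.cpow_natCast, ← Complex.cpow_add _ _ hu0]
      congr 1
      have : ((r - n : ℕ) : ℂ) = (r : ℂ) - (n : ℂ) := by
        push_cast [Nat.cast_sub hnr]
        ring
      rw [this]
      ring
    rw [e2, e3]
    rw [one_pow]
    calc ((-1:ℂ) ^ n * (u:ℂ) ^ (r - n : ℕ) * 1 * (r.choose n : ℂ)) * (u : ℂ) ^ (-s - 1) *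
          (Real.log u : ℂ) ^ (w - 1)
        = ((-1:ℂ) ^ n * (r.choose n : ℂ)) *
            (((u:ℂ) ^ (r - n : ℕ) * (u : ℂ) ^ (-s - 1)) * (Real.log u : ℂ) ^ (w - 1)) := by ring
      _ = _ := by rw [e4]
  rw [setIntegral_congr_fun measurableSet_Ioi hpt]
  rw [integral_finset_sum _ (fun n _ => ((AbsHurwitzAux.key_u (hcre n) hw).1.const_mul _))]
  have hval : ∀ n ∈ Finset.range (r + 1),
      (∫ u in Set.Ioi (1:ℝ), ((-1 : ℂ) ^ n * (r.choose n : ℂ)) *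
          ((u : ℂ) ^ (-(s - (r : ℂ) + (n : ℂ)) - 1) * (Real.log u : ℂ) ^ (w - 1)))
        = ((-1 : ℂ) ^ n * (r.choose n : ℂ)) *
            (Complex.Gamma w * (s - (r : ℂ) + (n : ℂ)) ^ (-w)) := by
    intro n _
    rw [integral_const_mul, (AbsHurwitzAux.key_u (hcre n) hw).2]
  rw [Finset.sum_congr rfl hval, Finset.mul_sum]
  apply Finset.sum_congr rfl
  intro n _
  have hΓ : Complex.Gamma w ≠ 0 := Complex.Gamma_ne_zero_of_re_pos hw
  field_simp
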